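/- For any compact set Ω ⊂ ℝ², any unit vector e ∈ ℝ², any radius r > 0, and any λ ∈ ℝ, let Ω(λ) = {x ∈ Ω : x·e ≤ λ}. Then the areas of the r-neighborhoods satisfy 𝓛²(Ωʳ \ Ω(λ)ʳ) ≥ 𝓛²(Ω \ Ω(λ)), where Eʳ denotes the open r-neighborhood {x : dist(x,E) < r}. -/

import Mathlib

open Metric MeasureTheory Set Filter
open scoped ENNReal Topology Real RealInnerProductSpace Pointwise
noncomputable section
local notation "E2" => EuclideanSpace ℝ (Fin 2)

theorem cut_neighborhood_area (Ω : Set E2) (hΩ : IsCompact Ω)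
    (e : E2) (he : ‖e‖ = 1) (r : ℝ) (hr : 0 < r) (lam : ℝ) :
    volume (Ω \ (Ω ∩ {x : E2 | (inner ℝ x e : ℝ) ≤ lam})) ≤
      volume (thickening r Ω \ thickening r (Ω ∩ {x : E2 | (inner ℝ x e : ℝ) ≤ lam})) := by
  set S : Set E2 := Ω ∩ {x : E2 | (inner ℝ x e : ℝ) ≤ lam} with hS
  set A : Set E2 := Ω \ S with hA
  -- key step: for 0 ≤ t < r, (t • e) +ᵥ A ⊆ thickening r Ω \ thickening t S
  have key : ∀ t : ℝ, 0 ≤ t → t < r →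
      (t • e) +ᵥ A ⊆ thickening r Ω \ thickening t S := by
    intro t ht htr p hp
    obtain ⟨x, hx, rfl⟩ := hp
    have hxΩ : x ∈ Ω := hx.1
    have hxlam : lam < (inner ℝ x e : ℝ) := by
      by_contra h
      exact hx.2 ⟨hxΩ, le_of_not_gt h⟩
    constructor
    · rw [Metric.mem_thickening_iff]
      refine ⟨x, hxΩ, ?_⟩
      have : dist (t • e +ᵥ x) x = ‖t • e‖ := by
        simp [dist_eq_norm]
      rw [this, norm_smul, he]
      simpa [abs_of_nonneg ht] using htr
    · rw [Metric.mem_thickening_iff]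
      rintro ⟨z, hz, hdz⟩
      have hzlam : (inner ℝ z e : ℝ) ≤ lam := hz.2
      have hinner : (inner ℝ (t • e +ᵥ x - z) e : ℝ) > t := by
        have : (inner ℝ (t • e +ᵥ x - z) e : ℝ)
            = t * (inner ℝ e e : ℝ) + inner ℝ x e - inner ℝ z e := by
          simp [vadd_eq_add, inner_sub_left, inner_add_left, real_inner_smul_left]
          ring
        rw [this, real_inner_self_eq_norm_sq, he]
        nlinarith
      have hle : (inner ℝ (t • e +ᵥ x - z) e : ℝ) ≤ ‖t • e +ᵥ x - z‖ := by
        calc (inner ℝ (t • e +ᵥ x - z) e : ℝ) ≤ ‖t • e +ᵥ x - z‖ * ‖e‖ :=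
              real_inner_le_norm _ _
          _ = ‖t • e +ᵥ x - z‖ := by rw [he, mul_one]
      rw [dist_eq_norm] at hdz
      simp only [vadd_eq_add, add_sub_assoc] at hdz hle hinner ⊢
      linarith
  -- measure of translate
  have hvol : ∀ t : ℝ, volume ((t • e) +ᵥ A) = volume A := fun t => measure_vadd _ _ _
  -- sequence tₙ ↑ r
  set u : ℕ → ℝ := fun n => r - r / (n + 1) with hu
  have hu_nonneg : ∀ n, 0 ≤ u n := by
    intro n
    have h1 : r / (n + 1) ≤ r := by
      apply div_le_self hr.le
      have : (0:ℝ) ≤ n := Nat.cast_nonneg n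
      linarith
    simp [hu]; linarith
  have hu_lt : ∀ n, u n < r := by
    intro n
    have : 0 < r / (n + 1) := by positivity
    simp [hu]; linarith
  have hu_mono : Monotone u := by
    intro m n hmn
    have hmn' : (m:ℝ) + 1 ≤ (n:ℝ) + 1 := by exact_mod_cast by omega
    have : r / (n + 1) ≤ r / (m + 1) :=
      div_le_div_of_nonneg_left hr.le (by positivity) hmn'
    simp [hu]; linarith
  -- each term bounds volume A
  have hbound : ∀ n, volume A ≤ volume (thickening r Ω \ thickening (u n) S) := by
    intro n
    calc volume A = volume ((u n • e) +ᵥ A) := (hvol _).symm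
      _ ≤ volume (thickening r Ω \ thickening (u n) S) :=
          measure_mono (key _ (hu_nonneg n) (hu_lt n))
  -- intersection
  have hinter : (⋂ n, thickening r Ω \ thickening (u n) S)
      = thickening r Ω \ thickening r S := by
    ext x
    simp only [mem_iInter, mem_diff]
    constructor
    · rintro h
      refine ⟨(h 0).1, fun hx => ?_⟩
      rw [Metric.mem_thickening_iff] at hx
      obtain ⟨z, hz, hdz⟩ := hx
      -- find n with u n > dist x z
      obtain ⟨n, hn⟩ := exists_nat_gt (r / (r - dist x z))
      have hrd : 0 < r - dist x z := by linarith
      have hdn : dist x z < u n := by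
        have h1 : r / (r - dist x z) < n + 1 := by
          have : (n:ℝ) ≤ n + 1 := by linarith
          linarith
        have h2 : r / (n + 1) < r - dist x z := by
          rw [div_lt_iff₀ (by positivity)] at h1 ⊢
          · nlinarith [dist_nonneg (x := x) (y := z)]
        simp [hu]; linarith
      exact (h n).2 (Metric.mem_thickening_iff.mpr ⟨z, hz, hdn⟩)
    · rintro ⟨h1, h2⟩ n
      exact ⟨h1, fun hx => h2 (thickening_mono (hu_lt n).le _ hx)⟩
  have hanti : Antitone (fun n => thickening r Ω \ thickening (u n) S) := by
    intro m n hmn x hx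
    exact ⟨hx.1, fun h => hx.2 (thickening_mono (hu_mono hmn) _ h)⟩
  have hfin : volume (thickening r Ω \ thickening (u 0) S) ≠ ∞ := by
    have hcpt : IsCompact (cthickening r Ω) := hΩ.cthickening
    have : volume (thickening r Ω \ thickening (u 0) S) ≤ volume (cthickening r Ω) :=
      measure_mono (fun x hx => thickening_subset_cthickening _ _ hx.1)
    exact ne_top_of_le_ne_top hcpt.measure_lt_top.ne this
  have hmeas : ∀ n, NullMeasurableSet (thickening r Ω \ thickening (u n) S) volume :=
    fun n => ((isOpen_thickening.measurableSet).diff isOpen_thickening.measurableSet).nullMeasurableSet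
  have htend := tendsto_measure_iInter_atTop hmeas hanti ⟨0, hfin⟩
  rw [hinter] at htend
  exact le_of_tendsto_of_tendsto' tendsto_const_nhds htend hbound
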